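/- Let X, Y, Z, U, V, W be finite-valued random variables with (U,V,W) → X → (Y,Z) a Markov chain, and suppose I(X';Y') ≥ I(X';Z') for every input distribution of the channel (Y is more capable than Z), meaning in particular I(X;Y|A) ≥ I(X;Z|A) for any A with A → X → (Y,Z). Then for every λ ∈ [0,1], λ I(W;Y) + (1−λ) I(W;Z) + I(U;Y|W) + I(V;Z|W) − I(U;V|W) ≤ max over W' with W' → X → (Y,Z), W' having the same X-marginal, of [λ I(W';Y) + (1−λ) I(W';Z) + I(X;Y|W')] = I(X;Y) + (1−λ) max_{W'} (I(W';Z) − I(W';Y)). -/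

import Mathlib

open scoped BigOperators Classical

noncomputable section

/-- Probability that the random variable `f` takes the value `a` under the pmf `μ`. -/
def prob {Ω A : Type*} [Fintype Ω] (μ : Ω → ℝ) (f : Ω → A) (a : A) : ℝ :=
  ∑ ω, if f ω = a then μ ω else 0

/-- Shannon entropy (natural log) of the finite-valued random variable `f`. -/
def ent {Ω A : Type*} [Fintype Ω] [Fintype A] (μ : Ω → ℝ) (f : Ω → A) : ℝ :=
  ∑ a, Real.negMulLog (prob μ f a)

/-- Conditional entropy `H(f | g)`. -/
def condEnt {Ω A B : Type*} [Fintype Ω] [Fintype A] [Fintype B]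
    (μ : Ω → ℝ) (f : Ω → A) (g : Ω → B) : ℝ :=
  ent μ (fun ω => (f ω, g ω)) - ent μ g

/-- Mutual information `I(f ; g)`. -/
def mutInfo {Ω A B : Type*} [Fintype Ω] [Fintype A] [Fintype B]
    (μ : Ω → ℝ) (f : Ω → A) (g : Ω → B) : ℝ :=
  ent μ f + ent μ g - ent μ (fun ω => (f ω, g ω))

/-- Conditional mutual information `I(f ; g | h)`. -/
def condMutInfo {Ω A B C : Type*} [Fintype Ω] [Fintype A] [Fintype B] [Fintype C]
    (μ : Ω → ℝ) (f : Ω → A) (g : Ω → B) (h : Ω → C) : ℝ :=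
  ent μ (fun ω => (f ω, h ω)) + ent μ (fun ω => (g ω, h ω))
    - ent μ (fun ω => (f ω, g ω, h ω)) - ent μ h

/-- `f → g → h` is a Markov chain under `μ`. -/
def IsMarkov {Ω A B C : Type*} [Fintype Ω] (μ : Ω → ℝ)
    (f : Ω → A) (g : Ω → B) (h : Ω → C) : Prop :=
  ∀ (a : A) (b : B) (c : C),
    prob μ (fun ω => (f ω, g ω, h ω)) (a, b, c) * prob μ g b
      = prob μ (fun ω => (f ω, g ω)) (a, b) * prob μ (fun ω => (g ω, h ω)) (b, c)

/-- A pmf: nonnegative and summing to one. -/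
def IsPmf {Ω : Type*} [Fintype Ω] (μ : Ω → ℝ) : Prop :=
  (∀ ω, 0 ≤ μ ω) ∧ ∑ ω, μ ω = 1


section Lemmas
variable {Ω A B C D E' : Type*} [Fintype Ω] {μ : Ω → ℝ}

lemma prob_nonneg (hμ : IsPmf μ) (f : Ω → A) (a : A) : 0 ≤ prob μ f a := by
  refine Finset.sum_nonneg fun ω _ => ?_
  split
  · exact hμ.1 ω
  · exact le_refl 0

lemma sum_prob [Fintype A] (hμ : IsPmf μ) (f : Ω → A) : ∑ a, prob μ f a = 1 := by
  unfold prob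
  rw [Finset.sum_comm]
  rw [show (∑ ω : Ω, ∑ a : A, if f ω = a then μ ω else 0) = ∑ ω : Ω, μ ω from
    Finset.sum_congr rfl fun ω _ => by rw [Finset.sum_ite_eq]; simp]
  exact hμ.2

lemma prob_le_comp (hμ : IsPmf μ) (f : Ω → A) (e : A → B) (a : A) :
    prob μ f a ≤ prob μ (fun ω => e (f ω)) (e a) := by
  refine Finset.sum_le_sum fun ω _ => ?_
  simp only []
  by_cases h : f ω = a
  · rw [if_pos h, if_pos (by rw [h])]
  · rw [if_neg h]
    split
    · exact hμ.1 ω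
    · exact le_refl 0

lemma prob_comp_inj {e : A → B} (he : Function.Injective e) (f : Ω → A) (a : A) :
    prob μ (fun ω => e (f ω)) (e a) = prob μ f a := by
  refine Finset.sum_congr rfl fun ω _ => ?_
  simp [he.eq_iff]

lemma prob_comp_zero (f : Ω → A) {e : A → B} {b : B} (hb : ∀ a, e a ≠ b) :
    prob μ (fun ω => e (f ω)) b = 0 := by
  refine Finset.sum_eq_zero fun ω _ => ?_
  rw [if_neg (hb (f ω))]

lemma ent_comp_inj [Fintype A] [Fintype B] {e : A → B} (he : Function.Injective e) (f : Ω → A) :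
    ent μ (fun ω => e (f ω)) = ent μ f := by
  unfold ent
  rw [← Finset.sum_subset (Finset.subset_univ (Finset.univ.image e))]
  · rw [Finset.sum_image (fun a _ a' _ h => he h)]
    exact Finset.sum_congr rfl fun a _ => by rw [prob_comp_inj he]
  · intro b _ hb
    rw [prob_comp_zero f (fun a ha => hb (Finset.mem_image.2 ⟨a, Finset.mem_univ a, ha⟩)),
      Real.negMulLog_zero]

lemma ite_sum_comm {ι : Type*} {P : Prop} [Decidable P] {s : Finset ι} (f : ι → ℝ) :
    (if P then ∑ x ∈ s, f x else 0) = ∑ x ∈ s, if P then f x else 0 := by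
  split
  · rfl
  · simp

lemma prob_marg_snd2 [Fintype B] (f : Ω → A) (g : Ω → B) (a : A) :
    prob μ f a = ∑ b, prob μ (fun ω => (f ω, g ω)) (a, b) := by
  unfold prob
  rw [Finset.sum_comm]
  refine Finset.sum_congr rfl fun ω _ => ?_
  try simp only []
  have h : ∀ b : B, (if (f ω, g ω) = (a, b) then μ ω else 0)
      = if g ω = b then (if f ω = a then μ ω else 0) else 0 := by
    intro b
    by_cases h1 : g ω = b <;> by_cases h2 : f ω = a <;> simp [Prod.ext_iff, h1, h2]
  have h2 : (∑ x : B, if (f ω, g ω) = (a, x) then μ ω else 0) = if f ω = a then μ ω else 0 := by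
    calc (∑ x : B, if (f ω, g ω) = (a, x) then μ ω else 0)
        = ∑ x : B, if g ω = x then (if f ω = a then μ ω else 0) else 0 :=
          Finset.sum_congr rfl fun x _ => h x
      _ = if f ω = a then μ ω else 0 := by rw [Finset.sum_ite_eq]; simp
  convert h2.symm

lemma prob_marg_fst2 [Fintype A] (f : Ω → A) (h : Ω → C) (c : C) :
    prob μ h c = ∑ a, prob μ (fun ω => (f ω, h ω)) (a, c) := by
  unfold prob
  rw [Finset.sum_comm]
  refine Finset.sum_congr rfl fun ω _ => ?_
  try simp only []
  have hh : ∀ a : A, (if (f ω, h ω) = (a, c) then μ ω else 0)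
      = if f ω = a then (if h ω = c then μ ω else 0) else 0 := by
    intro a
    by_cases h1 : f ω = a <;> by_cases h2 : h ω = c <;> simp [Prod.ext_iff, h1, h2]
  have h2 : (∑ x : A, if (f ω, h ω) = (x, c) then μ ω else 0) = if h ω = c then μ ω else 0 := by
    calc (∑ x : A, if (f ω, h ω) = (x, c) then μ ω else 0)
        = ∑ x : A, if f ω = x then (if h ω = c then μ ω else 0) else 0 :=
          Finset.sum_congr rfl fun x _ => hh x
      _ = if h ω = c then μ ω else 0 := by rw [Finset.sum_ite_eq]; simp
  convert h2.symm

lemma prob_marg_mid3 [Fintype B] (f : Ω → A) (g : Ω → B) (h : Ω → C) (a : A) (c : C) :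
    prob μ (fun ω => (f ω, h ω)) (a, c)
      = ∑ b, prob μ (fun ω => (f ω, g ω, h ω)) (a, b, c) := by
  unfold prob
  rw [Finset.sum_comm]
  refine Finset.sum_congr rfl fun ω _ => ?_
  try simp only []
  have hh : ∀ b : B, (if (f ω, g ω, h ω) = (a, b, c) then μ ω else 0)
      = if g ω = b then (if (f ω, h ω) = (a, c) then μ ω else 0) else 0 := by
    intro b
    by_cases h1 : g ω = b <;> by_cases h2 : f ω = a <;> by_cases h3 : h ω = c <;>
      simp [Prod.ext_iff, h1, h2, h3]
  have h2 : (∑ x : B, if (f ω, g ω, h ω) = (a, x, c) then μ ω else 0)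
      = if (f ω, h ω) = (a, c) then μ ω else 0 := by
    calc (∑ x : B, if (f ω, g ω, h ω) = (a, x, c) then μ ω else 0)
        = ∑ x : B, if g ω = x then (if (f ω, h ω) = (a, c) then μ ω else 0) else 0 :=
          Finset.sum_congr rfl fun x _ => hh x
      _ = if (f ω, h ω) = (a, c) then μ ω else 0 := by rw [Finset.sum_ite_eq]; simp
  convert h2.symm

lemma prob_marg_fst3 [Fintype A] (f : Ω → A) (g : Ω → B) (h : Ω → C) (b : B) (c : C) :
    prob μ (fun ω => (g ω, h ω)) (b, c)
      = ∑ a, prob μ (fun ω => (f ω, g ω, h ω)) (a, b, c) := by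
  unfold prob
  rw [Finset.sum_comm]
  refine Finset.sum_congr rfl fun ω _ => ?_
  try simp only []
  have hh : ∀ a : A, (if (f ω, g ω, h ω) = (a, b, c) then μ ω else 0)
      = if f ω = a then (if (g ω, h ω) = (b, c) then μ ω else 0) else 0 := by
    intro a
    by_cases h1 : f ω = a <;> by_cases h2 : g ω = b <;> by_cases h3 : h ω = c <;>
      simp [Prod.ext_iff, h1, h2, h3]
  have h2 : (∑ x : A, if (f ω, g ω, h ω) = (x, b, c) then μ ω else 0)
      = if (g ω, h ω) = (b, c) then μ ω else 0 := by
    calc (∑ x : A, if (f ω, g ω, h ω) = (x, b, c) then μ ω else 0)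
        = ∑ x : A, if f ω = x then (if (g ω, h ω) = (b, c) then μ ω else 0) else 0 :=
          Finset.sum_congr rfl fun x _ => hh x
      _ = if (g ω, h ω) = (b, c) then μ ω else 0 := by rw [Finset.sum_ite_eq]; simp
  convert h2.symm

lemma prob_map_left_pair [Fintype A] (f : Ω → A) (k : Ω → B) (e : A → C) (c : C) (y : B) :
    prob μ (fun ω => (e (f ω), k ω)) (c, y)
      = ∑ a, if e a = c then prob μ (fun ω => (f ω, k ω)) (a, y) else 0 := by
  unfold prob
  simp only [ite_sum_comm]
  rw [Finset.sum_comm]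
  refine Finset.sum_congr rfl fun ω _ => ?_
  try simp only []
  have hh : ∀ a : A, (if e a = c then (if (f ω, k ω) = (a, y) then μ ω else 0) else 0)
      = if f ω = a then (if (e (f ω), k ω) = (c, y) then μ ω else 0) else 0 := by
    intro a
    by_cases h1 : f ω = a
    · subst h1
      by_cases h2 : e (f ω) = c <;> by_cases h3 : k ω = y <;> simp [Prod.ext_iff, h2, h3]
    · by_cases h2 : e a = c <;> simp [Prod.ext_iff, h1, Ne.symm h1]
  have h2 : (∑ x : A, if e x = c then (if (f ω, k ω) = (x, y) then μ ω else 0) else 0)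
      = if (e (f ω), k ω) = (c, y) then μ ω else 0 := by
    calc (∑ x : A, if e x = c then (if (f ω, k ω) = (x, y) then μ ω else 0) else 0)
        = ∑ x : A, if f ω = x then (if (e (f ω), k ω) = (c, y) then μ ω else 0) else 0 :=
          Finset.sum_congr rfl fun x _ => hh x
      _ = if (e (f ω), k ω) = (c, y) then μ ω else 0 := by rw [Finset.sum_ite_eq]; simp
  convert h2.symm

lemma prob_map_right3 [Fintype C] (p : Ω → A) (q : Ω → B) (h : Ω → C) (e : C → D)
    (a : A) (x : B) (c' : D) :
    prob μ (fun ω => (p ω, q ω, e (h ω))) (a, x, c')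
      = ∑ c, if e c = c' then prob μ (fun ω => (p ω, q ω, h ω)) (a, x, c) else 0 := by
  unfold prob
  simp only [ite_sum_comm]
  rw [Finset.sum_comm]
  refine Finset.sum_congr rfl fun ω _ => ?_
  try simp only []
  have hh : ∀ c : C, (if e c = c' then (if (p ω, q ω, h ω) = (a, x, c) then μ ω else 0) else 0)
      = if h ω = c then (if (p ω, q ω, e (h ω)) = (a, x, c') then μ ω else 0) else 0 := by
    intro c
    by_cases h1 : h ω = c
    · subst h1
      by_cases h2 : e (h ω) = c' <;> by_cases h3 : p ω = a <;> by_cases h4 : q ω = x <;>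
        simp [Prod.ext_iff, h2, h3, h4]
    · by_cases h2 : e c = c' <;> simp [Prod.ext_iff, h1, Ne.symm h1]
  have h2 : (∑ z : C, if e z = c' then (if (p ω, q ω, h ω) = (a, x, z) then μ ω else 0) else 0)
      = if (p ω, q ω, e (h ω)) = (a, x, c') then μ ω else 0 := by
    calc (∑ z : C, if e z = c' then (if (p ω, q ω, h ω) = (a, x, z) then μ ω else 0) else 0)
        = ∑ z : C, if h ω = z then (if (p ω, q ω, e (h ω)) = (a, x, c') then μ ω else 0) else 0 :=
          Finset.sum_congr rfl fun z _ => hh z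
      _ = if (p ω, q ω, e (h ω)) = (a, x, c') then μ ω else 0 := by rw [Finset.sum_ite_eq]; simp
  convert h2.symm

lemma prob_map_right2 [Fintype C] (q : Ω → B) (h : Ω → C) (e : C → D) (x : B) (c' : D) :
    prob μ (fun ω => (q ω, e (h ω))) (x, c')
      = ∑ c, if e c = c' then prob μ (fun ω => (q ω, h ω)) (x, c) else 0 := by
  unfold prob
  simp only [ite_sum_comm]
  rw [Finset.sum_comm]
  refine Finset.sum_congr rfl fun ω _ => ?_
  try simp only []
  have hh : ∀ c : C, (if e c = c' then (if (q ω, h ω) = (x, c) then μ ω else 0) else 0)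
      = if h ω = c then (if (q ω, e (h ω)) = (x, c') then μ ω else 0) else 0 := by
    intro c
    by_cases h1 : h ω = c
    · subst h1
      by_cases h2 : e (h ω) = c' <;> by_cases h3 : q ω = x <;> simp [Prod.ext_iff, h2, h3]
    · by_cases h2 : e c = c' <;> simp [Prod.ext_iff, h1, Ne.symm h1]
  have h2 : (∑ z : C, if e z = c' then (if (q ω, h ω) = (x, z) then μ ω else 0) else 0)
      = if (q ω, e (h ω)) = (x, c') then μ ω else 0 := by
    calc (∑ z : C, if e z = c' then (if (q ω, h ω) = (x, z) then μ ω else 0) else 0)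
        = ∑ z : C, if h ω = z then (if (q ω, e (h ω)) = (x, c') then μ ω else 0) else 0 :=
          Finset.sum_congr rfl fun z _ => hh z
      _ = if (q ω, e (h ω)) = (x, c') then μ ω else 0 := by rw [Finset.sum_ite_eq]; simp
  convert h2.symm
lemma negMulLog_eq_sum {B : Type*} [Fintype B] {S : ℝ} {p : B → ℝ} (hS : S = ∑ b, p b) :
    Real.negMulLog S = ∑ b, -(p b * Real.log S) := by
  have h1 : ∑ b, -(p b * Real.log S) = -((∑ b, p b) * Real.log S) := by
    rw [Finset.sum_mul, Finset.sum_neg_distrib]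
  rw [h1, ← hS, Real.negMulLog]
  ring

lemma negMulLog_sum_le {B : Type*} [Fintype B] {p : B → ℝ} (hp : ∀ b, 0 ≤ p b) :
    Real.negMulLog (∑ b, p b) ≤ ∑ b, Real.negMulLog (p b) := by
  rcases eq_or_lt_of_le (Finset.sum_nonneg (fun b _ => hp b)) with h | h
  · have hz : ∀ b ∈ (Finset.univ : Finset B), p b = 0 :=
      (Finset.sum_eq_zero_iff_of_nonneg (fun b _ => hp b)).1 h.symm
    rw [← h, Real.negMulLog_zero,
      Finset.sum_congr rfl fun b hb => by rw [hz b hb, Real.negMulLog_zero]]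
    simp
  · rw [negMulLog_eq_sum rfl]
    refine Finset.sum_le_sum fun b _ => ?_
    rcases eq_or_lt_of_le (hp b) with hb | hb
    · rw [← hb]; simp [Real.negMulLog]
    · rw [Real.negMulLog]
      have hle : Real.log (p b) ≤ Real.log (∑ x, p x) :=
        Real.log_le_log hb (Finset.single_le_sum (fun x _ => hp x) (Finset.mem_univ b))
      nlinarith

lemma sum3_comm23 [Fintype A] [Fintype B] [Fintype C] (F : A → B → C → ℝ) :
    ∑ a, ∑ b, ∑ c, F a b c = ∑ a, ∑ c, ∑ b, F a b c :=
  Finset.sum_congr rfl fun _ _ => Finset.sum_comm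

lemma sum3_comm12 [Fintype A] [Fintype B] [Fintype C] (F : A → B → C → ℝ) :
    ∑ a, ∑ b, ∑ c, F a b c = ∑ b, ∑ a, ∑ c, F a b c :=
  Finset.sum_comm

lemma sum3_rotate [Fintype A] [Fintype B] [Fintype C] (F : A → B → C → ℝ) :
    ∑ a, ∑ b, ∑ c, F a b c = ∑ c, ∑ a, ∑ b, F a b c := by
  rw [sum3_comm23, sum3_comm12 (fun a c b => F a b c)]

lemma ent_pair13 [Fintype A] [Fintype B] [Fintype C] (f : Ω → A) (g : Ω → B) (h : Ω → C) :
    ent μ (fun ω => (f ω, h ω)) = ∑ a, ∑ b, ∑ c,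
      -(prob μ (fun ω => (f ω, g ω, h ω)) (a, b, c)
        * Real.log (prob μ (fun ω => (f ω, h ω)) (a, c))) := by
  unfold ent
  rw [Fintype.sum_prod_type]
  refine Finset.sum_congr rfl fun a _ => ?_
  rw [Finset.sum_comm]
  exact Finset.sum_congr rfl fun c _ => negMulLog_eq_sum (prob_marg_mid3 f g h a c)

lemma ent_pair23 [Fintype A] [Fintype B] [Fintype C] (f : Ω → A) (g : Ω → B) (h : Ω → C) :
    ent μ (fun ω => (g ω, h ω)) = ∑ a, ∑ b, ∑ c,
      -(prob μ (fun ω => (f ω, g ω, h ω)) (a, b, c)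
        * Real.log (prob μ (fun ω => (g ω, h ω)) (b, c))) := by
  unfold ent
  rw [Fintype.sum_prod_type, sum3_comm12 (fun b a c => _)]
  refine Finset.sum_congr rfl fun b _ => ?_
  rw [Finset.sum_comm]
  exact Finset.sum_congr rfl fun c _ => negMulLog_eq_sum (prob_marg_fst3 f g h b c)

lemma ent_third [Fintype A] [Fintype B] [Fintype C] (f : Ω → A) (g : Ω → B) (h : Ω → C) :
    ent μ h = ∑ a, ∑ b, ∑ c,
      -(prob μ (fun ω => (f ω, g ω, h ω)) (a, b, c) * Real.log (prob μ h c)) := by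
  unfold ent
  rw [sum3_rotate (fun a b c =>
    -(prob μ (fun ω => (f ω, g ω, h ω)) (a, b, c) * Real.log (prob μ h c)))]
  refine Finset.sum_congr rfl fun c _ => ?_
  have hinj : Function.Injective (fun t : (A × B) × C => (t.1.1, t.1.2, t.2)) := by
    intro ⟨⟨a, b⟩, c1⟩ ⟨⟨a', b'⟩, c'⟩ hh
    simp_all [Prod.ext_iff]
  have hS : prob μ h c = ∑ q : A × B, prob μ (fun ω => (f ω, g ω, h ω)) (q.1, q.2, c) := by
    rw [prob_marg_fst2 (fun ω => (f ω, g ω)) h c]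
    refine Finset.sum_congr rfl fun q _ => ?_
    exact (prob_comp_inj hinj (fun ω => ((f ω, g ω), h ω)) (q, c)).symm
  rw [negMulLog_eq_sum hS, Fintype.sum_prod_type]

lemma ent_triple [Fintype A] [Fintype B] [Fintype C] (f : Ω → A) (g : Ω → B) (h : Ω → C) :
    ent μ (fun ω => (f ω, g ω, h ω)) = ∑ a, ∑ b, ∑ c,
      -(prob μ (fun ω => (f ω, g ω, h ω)) (a, b, c)
        * Real.log (prob μ (fun ω => (f ω, g ω, h ω)) (a, b, c))) := by
  unfold ent
  rw [Fintype.sum_prod_type]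
  refine Finset.sum_congr rfl fun a _ => ?_
  rw [Fintype.sum_prod_type]
  refine Finset.sum_congr rfl fun b _ => Finset.sum_congr rfl fun c _ => ?_
  simp [Real.negMulLog]

lemma cmi_expand [Fintype A] [Fintype B] [Fintype C] (f : Ω → A) (g : Ω → B) (h : Ω → C) :
    condMutInfo μ f g h = ∑ a, ∑ b, ∑ c,
      prob μ (fun ω => (f ω, g ω, h ω)) (a, b, c) *
        (Real.log (prob μ (fun ω => (f ω, g ω, h ω)) (a, b, c)) + Real.log (prob μ h c)
          - Real.log (prob μ (fun ω => (f ω, h ω)) (a, c))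
          - Real.log (prob μ (fun ω => (g ω, h ω)) (b, c))) := by
  unfold condMutInfo
  rw [ent_pair13 f g h, ent_pair23 f g h, ent_third f g h, ent_triple f g h]
  simp only [← Finset.sum_add_distrib, ← Finset.sum_sub_distrib]
  refine Finset.sum_congr rfl fun a _ => Finset.sum_congr rfl fun b _ =>
    Finset.sum_congr rfl fun c _ => ?_
  ring
lemma condMutInfo_nonneg [Fintype A] [Fintype B] [Fintype C] (hμ : IsPmf μ)
    (f : Ω → A) (g : Ω → B) (h : Ω → C) : 0 ≤ condMutInfo μ f g h := by
  rw [cmi_expand f g h]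
  have key : ∀ a b c,
      prob μ (fun ω => (f ω, g ω, h ω)) (a, b, c)
        - prob μ (fun ω => (f ω, h ω)) (a, c) * prob μ (fun ω => (g ω, h ω)) (b, c)
            / prob μ h c
      ≤ prob μ (fun ω => (f ω, g ω, h ω)) (a, b, c) *
          (Real.log (prob μ (fun ω => (f ω, g ω, h ω)) (a, b, c)) + Real.log (prob μ h c)
            - Real.log (prob μ (fun ω => (f ω, h ω)) (a, c))
            - Real.log (prob μ (fun ω => (g ω, h ω)) (b, c))) := by
    intro a b c
    set P := prob μ (fun ω => (f ω, g ω, h ω)) (a, b, c) with hPdef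
    set Q1 := prob μ (fun ω => (f ω, h ω)) (a, c) with hQ1def
    set Q2 := prob μ (fun ω => (g ω, h ω)) (b, c) with hQ2def
    set R := prob μ h c with hRdef
    have hQ1n : 0 ≤ Q1 := prob_nonneg hμ _ _
    have hQ2n : 0 ≤ Q2 := prob_nonneg hμ _ _
    have hRn : 0 ≤ R := prob_nonneg hμ _ _
    rcases eq_or_lt_of_le (prob_nonneg hμ (fun ω => (f ω, g ω, h ω)) (a, b, c)) with hP | hP
    · have hP0 : P = 0 := hPdef.trans hP.symm
      rw [hP0, zero_mul]
      have : 0 ≤ Q1 * Q2 / R := div_nonneg (mul_nonneg hQ1n hQ2n) hRn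
      linarith
    · have hQ1 : 0 < Q1 :=
        lt_of_lt_of_le hP (prob_le_comp hμ (fun ω => (f ω, g ω, h ω))
          (fun t => (t.1, t.2.2)) (a, b, c))
      have hQ2 : 0 < Q2 :=
        lt_of_lt_of_le hP (prob_le_comp hμ (fun ω => (f ω, g ω, h ω))
          (fun t => (t.2.1, t.2.2)) (a, b, c))
      have hR : 0 < R :=
        lt_of_lt_of_le hP (prob_le_comp hμ (fun ω => (f ω, g ω, h ω))
          (fun t => t.2.2) (a, b, c))
      have hx : (0:ℝ) < Q1 * Q2 / (P * R) := by positivity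
      have hlog := Real.log_le_sub_one_of_pos hx
      have hexp : Real.log (Q1 * Q2 / (P * R))
          = Real.log Q1 + Real.log Q2 - Real.log P - Real.log R := by
        rw [Real.log_div (by positivity) (by positivity), Real.log_mul hQ1.ne' hQ2.ne',
          Real.log_mul hP.ne' hR.ne']
        ring
      have hPx : P * (Q1 * Q2 / (P * R)) = Q1 * Q2 / R := by
        have hP0 : P ≠ 0 := hP.ne'
        field_simp
      have h2 : P * Real.log (Q1 * Q2 / (P * R)) ≤ Q1 * Q2 / R - P := by
        have := mul_le_mul_of_nonneg_left hlog hP.le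
        rw [mul_sub, hPx] at this
        linarith
      rw [hexp] at h2
      nlinarith
  have h1 : ∑ a, ∑ b, ∑ c, prob μ (fun ω => (f ω, g ω, h ω)) (a, b, c) = 1 := by
    have := sum_prob hμ (fun ω => (f ω, g ω, h ω))
    simp only [Fintype.sum_prod_type] at this
    exact this
  have h2 : ∑ a, ∑ b, ∑ c, (prob μ (fun ω => (f ω, h ω)) (a, c)
      * prob μ (fun ω => (g ω, h ω)) (b, c) / prob μ h c) ≤ 1 := by
    rw [sum3_rotate (fun a b c => prob μ (fun ω => (f ω, h ω)) (a, c)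
      * prob μ (fun ω => (g ω, h ω)) (b, c) / prob μ h c)]
    have hper : ∀ c, ∑ a, ∑ b, (prob μ (fun ω => (f ω, h ω)) (a, c)
        * prob μ (fun ω => (g ω, h ω)) (b, c) / prob μ h c) ≤ prob μ h c := by
      intro c
      have step : ∀ a, ∑ b, (prob μ (fun ω => (f ω, h ω)) (a, c)
          * prob μ (fun ω => (g ω, h ω)) (b, c) / prob μ h c)
          = prob μ (fun ω => (f ω, h ω)) (a, c) * (prob μ h c / prob μ h c) := by
        intro a
        rw [← Finset.sum_div, ← Finset.mul_sum, ← prob_marg_fst2 g h c, mul_div_assoc]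
      rw [Finset.sum_congr rfl fun a _ => step a, ← Finset.sum_mul, ← prob_marg_fst2 f h c]
      rcases eq_or_ne (prob μ h c) 0 with hz | hz
      · rw [hz]; simp
      · rw [div_self hz, mul_one]
    calc ∑ c, ∑ a, ∑ b, (prob μ (fun ω => (f ω, h ω)) (a, c)
          * prob μ (fun ω => (g ω, h ω)) (b, c) / prob μ h c)
        ≤ ∑ c, prob μ h c := Finset.sum_le_sum fun c _ => hper c
      _ = 1 := sum_prob hμ h
  have hmain : ∑ a, ∑ b, ∑ c, (prob μ (fun ω => (f ω, g ω, h ω)) (a, b, c)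
      - prob μ (fun ω => (f ω, h ω)) (a, c) * prob μ (fun ω => (g ω, h ω)) (b, c)
          / prob μ h c)
      ≤ ∑ a, ∑ b, ∑ c, prob μ (fun ω => (f ω, g ω, h ω)) (a, b, c) *
          (Real.log (prob μ (fun ω => (f ω, g ω, h ω)) (a, b, c)) + Real.log (prob μ h c)
            - Real.log (prob μ (fun ω => (f ω, h ω)) (a, c))
            - Real.log (prob μ (fun ω => (g ω, h ω)) (b, c))) :=
    Finset.sum_le_sum fun a _ => Finset.sum_le_sum fun b _ =>
      Finset.sum_le_sum fun c _ => key a b c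
  have hsplit : ∑ a, ∑ b, ∑ c, (prob μ (fun ω => (f ω, g ω, h ω)) (a, b, c)
      - prob μ (fun ω => (f ω, h ω)) (a, c) * prob μ (fun ω => (g ω, h ω)) (b, c)
          / prob μ h c)
      = (∑ a, ∑ b, ∑ c, prob μ (fun ω => (f ω, g ω, h ω)) (a, b, c))
        - ∑ a, ∑ b, ∑ c, (prob μ (fun ω => (f ω, h ω)) (a, c)
            * prob μ (fun ω => (g ω, h ω)) (b, c) / prob μ h c) := by
    simp only [Finset.sum_sub_distrib]
  linarith

lemma cmi_markov_zero [Fintype A] [Fintype B] [Fintype C] (hμ : IsPmf μ)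
    {f : Ω → A} {g : Ω → B} {h : Ω → C} (hm : IsMarkov μ f g h) :
    condMutInfo μ f h g = 0 := by
  rw [cmi_expand f h g]
  refine Finset.sum_eq_zero fun a _ => Finset.sum_eq_zero fun c _ =>
    Finset.sum_eq_zero fun b _ => ?_
  have hinj1 : Function.Injective (fun t : A × B × C => (t.1, t.2.2, t.2.1)) := by
    intro ⟨a1, b1, c1⟩ ⟨a2, b2, c2⟩ hh
    simp_all [Prod.ext_iff]
  have r1 : prob μ (fun ω => (f ω, h ω, g ω)) (a, c, b)
      = prob μ (fun ω => (f ω, g ω, h ω)) (a, b, c) :=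
    prob_comp_inj hinj1 (fun ω => (f ω, g ω, h ω)) (a, b, c)
  have hinj2 : Function.Injective (fun t : B × C => (t.2, t.1)) := by
    intro ⟨b1, c1⟩ ⟨b2, c2⟩ hh
    simp_all [Prod.ext_iff]
  have r2 : prob μ (fun ω => (h ω, g ω)) (c, b)
      = prob μ (fun ω => (g ω, h ω)) (b, c) :=
    prob_comp_inj hinj2 (fun ω => (g ω, h ω)) (b, c)
  rw [r1, r2]
  rcases eq_or_lt_of_le (prob_nonneg hμ (fun ω => (f ω, g ω, h ω)) (a, b, c)) with hP | hP
  · rw [← hP]; ring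
  · have hg : 0 < prob μ g b :=
      lt_of_lt_of_le hP (prob_le_comp hμ (fun ω => (f ω, g ω, h ω)) (fun t => t.2.1) (a, b, c))
    have hfg : 0 < prob μ (fun ω => (f ω, g ω)) (a, b) :=
      lt_of_lt_of_le hP (prob_le_comp hμ (fun ω => (f ω, g ω, h ω))
        (fun t => (t.1, t.2.1)) (a, b, c))
    have hgh : 0 < prob μ (fun ω => (g ω, h ω)) (b, c) :=
      lt_of_lt_of_le hP (prob_le_comp hμ (fun ω => (f ω, g ω, h ω))
        (fun t => (t.2.1, t.2.2)) (a, b, c))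
    have hb0 : Real.log (prob μ (fun ω => (f ω, g ω, h ω)) (a, b, c)) + Real.log (prob μ g b)
        - Real.log (prob μ (fun ω => (f ω, g ω)) (a, b))
        - Real.log (prob μ (fun ω => (g ω, h ω)) (b, c)) = 0 := by
      rw [← Real.log_mul hP.ne' hg.ne', hm a b c, Real.log_mul hfg.ne' hgh.ne']
      ring
    rw [hb0, mul_zero]

lemma markov_comp_left [Fintype A] {f : Ω → A} {g : Ω → B} {h : Ω → C}
    (hm : IsMarkov μ f g h) (e : A → D) : IsMarkov μ (fun ω => e (f ω)) g h := by
  intro a' x c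
  have l1 := prob_map_left_pair (μ := μ) f (fun ω => (g ω, h ω)) e a' (x, c)
  have l2 := prob_map_left_pair (μ := μ) f g e a' x
  rw [show prob μ (fun ω => ((fun ω => e (f ω)) ω, g ω, h ω)) (a', x, c)
      = prob μ (fun ω => (e (f ω), g ω, h ω)) (a', x, c) from rfl, l1, l2,
    Finset.sum_mul, Finset.sum_mul]
  refine Finset.sum_congr rfl fun a _ => ?_
  simp only [ite_mul, zero_mul]
  split
  · exact hm a x c
  · rfl

lemma markov_comp_right [Fintype C] {f : Ω → A} {g : Ω → B} {h : Ω → C}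
    (hm : IsMarkov μ f g h) (e : C → D) : IsMarkov μ f g (fun ω => e (h ω)) := by
  intro a x c'
  have l1 := prob_map_right3 (μ := μ) f g h e a x c'
  have l2 := prob_map_right2 (μ := μ) g h e x c'
  rw [l1, l2, Finset.sum_mul, Finset.mul_sum]
  refine Finset.sum_congr rfl fun c _ => ?_
  simp only [ite_mul, mul_ite, zero_mul, mul_zero]
  split
  · exact hm a x c
  · rfl

lemma markov_weak_union [Fintype A] [Fintype B] (hμ : IsPmf μ)
    {f₁ : Ω → A} {f₂ : Ω → B} {g : Ω → C} {h : Ω → D}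
    (hm : IsMarkov μ (fun ω => (f₁ ω, f₂ ω)) g h) :
    IsMarkov μ f₁ (fun ω => (g ω, f₂ ω)) h := by
  have hm₂ : IsMarkov μ f₂ g h := markov_comp_left hm Prod.snd
  rintro a ⟨x, w⟩ c
  have hinj1 : Function.Injective (fun t : (A × B) × C × D => (t.1.1, (t.2.1, t.1.2), t.2.2)) := by
    intro ⟨⟨a1, b1⟩, c1, d1⟩ ⟨⟨a2, b2⟩, c2, d2⟩ hh
    simp_all [Prod.ext_iff]
  have r1 : prob μ (fun ω => (f₁ ω, (g ω, f₂ ω), h ω)) (a, (x, w), c)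
      = prob μ (fun ω => ((f₁ ω, f₂ ω), g ω, h ω)) ((a, w), x, c) :=
    prob_comp_inj hinj1 (fun ω => ((f₁ ω, f₂ ω), g ω, h ω)) ((a, w), x, c)
  have hinj2 : Function.Injective (fun t : B × C => (t.2, t.1)) := by
    intro ⟨b1, c1⟩ ⟨b2, c2⟩ hh
    simp_all [Prod.ext_iff]
  have r2 : prob μ (fun ω => (g ω, f₂ ω)) (x, w) = prob μ (fun ω => (f₂ ω, g ω)) (w, x) :=
    prob_comp_inj hinj2 (fun ω => (f₂ ω, g ω)) (w, x)
  have hinj3 : Function.Injective (fun t : (A × B) × C => (t.1.1, (t.2, t.1.2))) := by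
    intro ⟨⟨a1, b1⟩, c1⟩ ⟨⟨a2, b2⟩, c2⟩ hh
    simp_all [Prod.ext_iff]
  have r3 : prob μ (fun ω => (f₁ ω, (g ω, f₂ ω))) (a, (x, w))
      = prob μ (fun ω => ((f₁ ω, f₂ ω), g ω)) ((a, w), x) :=
    prob_comp_inj hinj3 (fun ω => ((f₁ ω, f₂ ω), g ω)) ((a, w), x)
  have hinj4 : Function.Injective (fun t : B × C × D => ((t.2.1, t.1), t.2.2)) := by
    intro ⟨b1, c1, d1⟩ ⟨b2, c2, d2⟩ hh
    simp_all [Prod.ext_iff]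
  have r4 : prob μ (fun ω => ((g ω, f₂ ω), h ω)) ((x, w), c)
      = prob μ (fun ω => (f₂ ω, g ω, h ω)) (w, x, c) :=
    prob_comp_inj hinj4 (fun ω => (f₂ ω, g ω, h ω)) (w, x, c)
  rw [show prob μ (fun ω => (f₁ ω, (fun ω => (g ω, f₂ ω)) ω, h ω)) (a, (x, w), c)
      = prob μ (fun ω => (f₁ ω, (g ω, f₂ ω), h ω)) (a, (x, w), c) from rfl, r1, r2, r3, r4]
  rcases eq_or_ne (prob μ g x) 0 with hx | hx
  · have h1 : prob μ (fun ω => ((f₁ ω, f₂ ω), g ω, h ω)) ((a, w), x, c) = 0 :=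
      le_antisymm (le_trans (prob_le_comp hμ (fun ω => ((f₁ ω, f₂ ω), g ω, h ω))
        (fun t => t.2.1) ((a, w), x, c)) (le_of_eq hx)) (prob_nonneg hμ _ _)
    have h2 : prob μ (fun ω => ((f₁ ω, f₂ ω), g ω)) ((a, w), x) = 0 :=
      le_antisymm (le_trans (prob_le_comp hμ (fun ω => ((f₁ ω, f₂ ω), g ω))
        Prod.snd ((a, w), x)) (le_of_eq hx)) (prob_nonneg hμ _ _)
    rw [h1, h2, zero_mul, zero_mul]
  · apply mul_right_cancel₀ hx
    have e1 := hm (a, w) x c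
    have e2 := hm₂ w x c
    linear_combination prob μ (fun ω => (f₂ ω, g ω)) (w, x) * e1
      - prob μ (fun ω => ((f₁ ω, f₂ ω), g ω)) ((a, w), x) * e2

section Perm
variable [Fintype A] [Fintype B] [Fintype C] [Fintype D]

lemma ent_pair_comm (f : Ω → A) (g : Ω → B) :
    ent μ (fun ω => (f ω, g ω)) = ent μ (fun ω => (g ω, f ω)) := by
  have hinj : Function.Injective (fun t : B × A => (t.2, t.1)) := by
    intro ⟨b1, a1⟩ ⟨b2, a2⟩ hh
    simp_all [Prod.ext_iff]
  exact (ent_comp_inj hinj (fun ω => (g ω, f ω)) : _)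

lemma ent_swap12 (p : Ω → A) (q : Ω → B) (r : Ω → C) :
    ent μ (fun ω => (p ω, q ω, r ω)) = ent μ (fun ω => (q ω, p ω, r ω)) := by
  have hinj : Function.Injective (fun t : B × A × C => (t.2.1, t.1, t.2.2)) := by
    intro ⟨b1, a1, c1⟩ ⟨b2, a2, c2⟩ hh
    simp_all [Prod.ext_iff]
  exact (ent_comp_inj hinj (fun ω => (q ω, p ω, r ω)) : _)

lemma ent_swap13_3 (p : Ω → A) (q : Ω → B) (r : Ω → C) :
    ent μ (fun ω => (p ω, q ω, r ω)) = ent μ (fun ω => (r ω, q ω, p ω)) := by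
  have hinj : Function.Injective (fun t : C × B × A => (t.2.2, t.2.1, t.1)) := by
    intro ⟨c1, b1, a1⟩ ⟨c2, b2, a2⟩ hh
    simp_all [Prod.ext_iff]
  exact (ent_comp_inj hinj (fun ω => (r ω, q ω, p ω)) : _)

lemma ent_swap13_4 (p : Ω → A) (q : Ω → B) (r : Ω → C) (s : Ω → D) :
    ent μ (fun ω => (p ω, q ω, r ω, s ω)) = ent μ (fun ω => (r ω, q ω, p ω, s ω)) := by
  have hinj : Function.Injective
      (fun t : C × B × A × D => (t.2.2.1, t.2.1, t.1, t.2.2.2)) := by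
    intro ⟨c1, b1, a1, d1⟩ ⟨c2, b2, a2, d2⟩ hh
    simp_all [Prod.ext_iff]
  exact (ent_comp_inj hinj (fun ω => (r ω, q ω, p ω, s ω)) : _)

lemma ent_swap23_4 (p : Ω → A) (q : Ω → B) (r : Ω → C) (s : Ω → D) :
    ent μ (fun ω => (p ω, q ω, r ω, s ω)) = ent μ (fun ω => (p ω, r ω, q ω, s ω)) := by
  have hinj : Function.Injective
      (fun t : A × C × B × D => (t.1, t.2.2.1, t.2.1, t.2.2.2)) := by
    intro ⟨a1, c1, b1, d1⟩ ⟨a2, c2, b2, d2⟩ hh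
    simp_all [Prod.ext_iff]
  exact (ent_comp_inj hinj (fun ω => (p ω, r ω, q ω, s ω)) : _)

lemma ent_pair_comp_snd {e : C → D} (he : Function.Injective e) (f : Ω → A) (h : Ω → C) :
    ent μ (fun ω => (f ω, e (h ω))) = ent μ (fun ω => (f ω, h ω)) := by
  have hinj : Function.Injective (fun t : A × C => (t.1, e t.2)) := by
    intro ⟨a1, c1⟩ ⟨a2, c2⟩ hh
    simp only [Prod.ext_iff] at hh ⊢
    exact ⟨hh.1, he hh.2⟩
  exact (ent_comp_inj hinj (fun ω => (f ω, h ω)) : _)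

lemma ent_pair_comp_fst {e : A → D} (he : Function.Injective e) (f : Ω → A) (h : Ω → C) :
    ent μ (fun ω => (e (f ω), h ω)) = ent μ (fun ω => (f ω, h ω)) := by
  have hinj : Function.Injective (fun t : A × C => (e t.1, t.2)) := by
    intro ⟨a1, c1⟩ ⟨a2, c2⟩ hh
    simp only [Prod.ext_iff] at hh ⊢
    exact ⟨he hh.1, hh.2⟩
  exact (ent_comp_inj hinj (fun ω => (f ω, h ω)) : _)

lemma ent_triple_comp_thd {e : C → D} (he : Function.Injective e)
    (f : Ω → A) (g : Ω → B) (h : Ω → C) :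
    ent μ (fun ω => (f ω, g ω, e (h ω))) = ent μ (fun ω => (f ω, g ω, h ω)) := by
  have hinj : Function.Injective (fun t : A × B × C => (t.1, t.2.1, e t.2.2)) := by
    intro ⟨a1, b1, c1⟩ ⟨a2, b2, c2⟩ hh
    simp only [Prod.ext_iff] at hh ⊢
    exact ⟨hh.1, hh.2.1, he hh.2.2⟩
  exact (ent_comp_inj hinj (fun ω => (f ω, g ω, h ω)) : _)

lemma cmi_comp_cond {e : C → D} (he : Function.Injective e)
    (f : Ω → A) (g : Ω → B) (h : Ω → C) :
    condMutInfo μ f g (fun ω => e (h ω)) = condMutInfo μ f g h := by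
  simp only [condMutInfo]
  rw [ent_pair_comp_snd he f h, ent_pair_comp_snd he g h, ent_triple_comp_thd he f g h,
    ent_comp_inj he h]

lemma mutInfo_comp_left {e : A → D} (he : Function.Injective e) (f : Ω → A) (g : Ω → B) :
    mutInfo μ (fun ω => e (f ω)) g = mutInfo μ f g := by
  simp only [mutInfo]
  rw [ent_comp_inj he f, ent_pair_comp_fst he f g]

lemma ent_le_pair (hμ : IsPmf μ) (f : Ω → A) (g : Ω → B) :
    ent μ f ≤ ent μ (fun ω => (f ω, g ω)) := by
  unfold ent
  rw [Fintype.sum_prod_type]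
  refine Finset.sum_le_sum fun a _ => ?_
  rw [prob_marg_snd2 f g a]
  exact negMulLog_sum_le fun b => prob_nonneg hμ _ _

lemma ent_const_fin1 (hμ : IsPmf μ) : ent μ (fun _ : Ω => (0 : Fin 1)) = 0 := by
  unfold ent
  rw [Fin.sum_univ_one]
  have : prob μ (fun _ : Ω => (0 : Fin 1)) 0 = 1 := by
    unfold prob
    simp [hμ.2]
  rw [this, Real.negMulLog_one]

lemma mutInfo_nonneg (hμ : IsPmf μ) (f : Ω → A) (g : Ω → B) : 0 ≤ mutInfo μ f g := by
  have h := condMutInfo_nonneg hμ f g (fun _ : Ω => (0 : Fin 1))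
  simp only [condMutInfo] at h
  have hinj1 : Function.Injective (fun a : A => (a, (0 : Fin 1))) := by
    intro a1 a2 hh
    simpa [Prod.ext_iff] using hh
  have hinj2 : Function.Injective (fun b : B => (b, (0 : Fin 1))) := by
    intro a1 a2 hh
    simpa [Prod.ext_iff] using hh
  have hinj3 : Function.Injective (fun p : A × B => (p.1, p.2, (0 : Fin 1))) := by
    intro ⟨a1, b1⟩ ⟨a2, b2⟩ hh
    simpa [Prod.ext_iff] using hh
  have e1 : ent μ (fun ω => (f ω, (0 : Fin 1))) = ent μ f := ent_comp_inj hinj1 f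
  have e2 : ent μ (fun ω => (g ω, (0 : Fin 1))) = ent μ g := ent_comp_inj hinj2 g
  have e3 : ent μ (fun ω => (f ω, g ω, (0 : Fin 1))) = ent μ (fun ω => (f ω, g ω)) :=
    (ent_comp_inj hinj3 (fun ω => (f ω, g ω)) : _)
  rw [e1, e2, e3, ent_const_fin1 hμ] at h
  simp only [mutInfo]
  linarith

lemma mutInfo_le_ent (hμ : IsPmf μ) (f : Ω → A) (g : Ω → B) :
    mutInfo μ f g ≤ ent μ g := by
  simp only [mutInfo]
  linarith [ent_le_pair hμ f g]

end Perm

section Chains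
variable [Fintype A] [Fintype B] [Fintype C] [Fintype D]

lemma cmi_chain1 (V : Ω → A) (Z : Ω → B) (U : Ω → C) (W : Ω → D) :
    condMutInfo μ V Z W + condMutInfo μ V U (fun ω => (Z ω, W ω))
      = condMutInfo μ U V W + condMutInfo μ V Z (fun ω => (U ω, W ω)) := by
  simp only [condMutInfo]
  have h1 : ent μ (fun ω => (U ω, Z ω, W ω)) = ent μ (fun ω => (Z ω, U ω, W ω)) :=
    ent_swap12 U Z W
  have h2 : ent μ (fun ω => (V ω, U ω, Z ω, W ω)) = ent μ (fun ω => (V ω, Z ω, U ω, W ω)) :=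
    ent_swap23_4 V U Z W
  have h3 : ent μ (fun ω => (U ω, V ω, W ω)) = ent μ (fun ω => (V ω, U ω, W ω)) :=
    ent_swap12 U V W
  linarith

lemma cmi_chain_swap (a : Ω → A) (b : Ω → B) (y : Ω → C) (w : Ω → D) :
    condMutInfo μ a y w + condMutInfo μ b y (fun ω => (a ω, w ω))
      = condMutInfo μ b y w + condMutInfo μ a y (fun ω => (b ω, w ω)) := by
  simp only [condMutInfo]
  have h1 : ent μ (fun ω => (y ω, a ω, w ω)) = ent μ (fun ω => (a ω, y ω, w ω)) :=
    ent_swap12 y a w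
  have h2 : ent μ (fun ω => (y ω, b ω, w ω)) = ent μ (fun ω => (b ω, y ω, w ω)) :=
    ent_swap12 y b w
  have h3 : ent μ (fun ω => (b ω, a ω, w ω)) = ent μ (fun ω => (a ω, b ω, w ω)) :=
    ent_swap12 b a w
  have h4 : ent μ (fun ω => (b ω, y ω, a ω, w ω)) = ent μ (fun ω => (a ω, y ω, b ω, w ω)) :=
    ent_swap13_4 b y a w
  linarith

lemma mi_chain (c : Ω → A) (X : Ω → B) (Y : Ω → C) :
    mutInfo μ c Y + condMutInfo μ X Y c = mutInfo μ X Y + condMutInfo μ c Y X := by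
  simp only [mutInfo, condMutInfo]
  have h1 : ent μ (fun ω => (c ω, Y ω)) = ent μ (fun ω => (Y ω, c ω)) := ent_pair_comm c Y
  have h2 : ent μ (fun ω => (X ω, Y ω)) = ent μ (fun ω => (Y ω, X ω)) := ent_pair_comm X Y
  have h3 : ent μ (fun ω => (X ω, c ω)) = ent μ (fun ω => (c ω, X ω)) := ent_pair_comm X c
  have h4 : ent μ (fun ω => (X ω, Y ω, c ω)) = ent μ (fun ω => (c ω, Y ω, X ω)) :=
    ent_swap13_3 X Y c
  linarith
end Chains

end Lemmas

/-- If `Y` is more capable than `Z` (`I(X;Z|A) ≤ I(X;Y|A)` for every auxiliary `A`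
with `A → X → (Y,Z)` Markov), then the λ-sum-rate expression is at most the maximum
over auxiliaries `W'` of `λ I(W';Y) + (1−λ) I(W';Z) + I(X;Y|W')`, which equals
`I(X;Y) + (1−λ) max_{W'} (I(W';Z) − I(W';Y))`. -/
theorem stmt18 {Ω 𝒰 𝒱 𝒲 𝒳 𝒴 𝒵 : Type*} [Fintype Ω] [Fintype 𝒰] [Fintype 𝒱] [Fintype 𝒲]
    [Fintype 𝒳] [Fintype 𝒴] [Fintype 𝒵] (μ : Ω → ℝ) (hμ : IsPmf μ)
    (U : Ω → 𝒰) (V : Ω → 𝒱) (W : Ω → 𝒲) (X : Ω → 𝒳) (Y : Ω → 𝒴) (Z : Ω → 𝒵)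
    (hMarkov : IsMarkov μ (fun ω => (U ω, V ω, W ω)) X (fun ω => (Y ω, Z ω)))
    (hMoreCapable : ∀ (n : ℕ) (A : Ω → Fin n),
      IsMarkov μ A X (fun ω => (Y ω, Z ω)) → condMutInfo μ X Z A ≤ condMutInfo μ X Y A) :
    ∀ l ∈ Set.Icc (0 : ℝ) 1,
      (l * mutInfo μ W Y + (1 - l) * mutInfo μ W Z + condMutInfo μ U Y W
          + condMutInfo μ V Z W - condMutInfo μ U V W
        ≤ sSup {v : ℝ | ∃ (n : ℕ) (W' : Ω → Fin n),
            IsMarkov μ W' X (fun ω => (Y ω, Z ω)) ∧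
            v = l * mutInfo μ W' Y + (1 - l) * mutInfo μ W' Z + condMutInfo μ X Y W'}) ∧
      (sSup {v : ℝ | ∃ (n : ℕ) (W' : Ω → Fin n),
            IsMarkov μ W' X (fun ω => (Y ω, Z ω)) ∧
            v = l * mutInfo μ W' Y + (1 - l) * mutInfo μ W' Z + condMutInfo μ X Y W'}
        = mutInfo μ X Y + (1 - l) * sSup {v : ℝ | ∃ (n : ℕ) (W' : Ω → Fin n),
            IsMarkov μ W' X (fun ω => (Y ω, Z ω)) ∧
            v = mutInfo μ W' Z - mutInfo μ W' Y}) := by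
  intro l hl
  obtain ⟨hl0, hl1⟩ := hl
  have hW : IsMarkov μ W X (fun ω => (Y ω, Z ω)) :=
    markov_comp_left hMarkov (fun t => t.2.2)
  have hUW : IsMarkov μ (fun ω => (U ω, W ω)) X (fun ω => (Y ω, Z ω)) :=
    markov_comp_left hMarkov (fun t => (t.1, t.2.2))
  have hVUW_Z : IsMarkov μ (fun ω => (V ω, U ω, W ω)) X Z :=
    markov_comp_left (markov_comp_right hMarkov Prod.snd) (fun t => (t.2.1, t.1, t.2.2))
  have hV_XUW : IsMarkov μ V (fun ω => (X ω, U ω, W ω)) Z :=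
    markov_weak_union hμ (f₁ := V) (f₂ := fun ω => (U ω, W ω)) hVUW_Z
  have hVZ0 : condMutInfo μ V Z (fun ω => (X ω, U ω, W ω)) = 0 := cmi_markov_zero hμ hV_XUW
  have hUW_Y : IsMarkov μ (fun ω => (U ω, W ω)) X Y := markov_comp_right hUW Prod.fst
  have hU_XW : IsMarkov μ U (fun ω => (X ω, W ω)) Y :=
    markov_weak_union hμ (f₁ := U) (f₂ := W) hUW_Y
  have hUY0 : condMutInfo μ U Y (fun ω => (X ω, W ω)) = 0 := cmi_markov_zero hμ hU_XW
  have hmc : condMutInfo μ X Z (fun ω => (U ω, W ω))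
      ≤ condMutInfo μ X Y (fun ω => (U ω, W ω)) := by
    set eUW := Fintype.equivFin (𝒰 × 𝒲) with heUW
    have hA : IsMarkov μ (fun ω => eUW (U ω, W ω)) X (fun ω => (Y ω, Z ω)) :=
      markov_comp_left hUW eUW
    have hmc0 := hMoreCapable (Fintype.card (𝒰 × 𝒲)) (fun ω => eUW (U ω, W ω)) hA
    have r1 : condMutInfo μ X Z (fun ω => eUW (U ω, W ω))
        = condMutInfo μ X Z (fun ω => (U ω, W ω)) :=
      cmi_comp_cond eUW.injective X Z (fun ω => (U ω, W ω))
    have r2 : condMutInfo μ X Y (fun ω => eUW (U ω, W ω))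
        = condMutInfo μ X Y (fun ω => (U ω, W ω)) :=
      cmi_comp_cond eUW.injective X Y (fun ω => (U ω, W ω))
    rwa [r1, r2] at hmc0
  have key : condMutInfo μ U Y W + condMutInfo μ V Z W - condMutInfo μ U V W
      ≤ condMutInfo μ X Y W := by
    have c1 : condMutInfo μ V Z W + condMutInfo μ V U (fun ω => (Z ω, W ω))
        = condMutInfo μ U V W + condMutInfo μ V Z (fun ω => (U ω, W ω)) :=
      cmi_chain1 V Z U W
    have n1 : 0 ≤ condMutInfo μ V U (fun ω => (Z ω, W ω)) :=
      condMutInfo_nonneg hμ V U (fun ω => (Z ω, W ω))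
    have c2 : condMutInfo μ V Z (fun ω => (U ω, W ω))
          + condMutInfo μ X Z (fun ω => (V ω, U ω, W ω))
        = condMutInfo μ X Z (fun ω => (U ω, W ω))
          + condMutInfo μ V Z (fun ω => (X ω, U ω, W ω)) :=
      cmi_chain_swap V X Z (fun ω => (U ω, W ω))
    have n2 : 0 ≤ condMutInfo μ X Z (fun ω => (V ω, U ω, W ω)) :=
      condMutInfo_nonneg hμ X Z (fun ω => (V ω, U ω, W ω))
    have c4 : condMutInfo μ U Y W + condMutInfo μ X Y (fun ω => (U ω, W ω))
        = condMutInfo μ X Y W + condMutInfo μ U Y (fun ω => (X ω, W ω)) :=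
      cmi_chain_swap U X Y W
    linarith
  have hid : ∀ (n : ℕ) (W' : Ω → Fin n), IsMarkov μ W' X (fun ω => (Y ω, Z ω)) →
      condMutInfo μ X Y W' = mutInfo μ X Y - mutInfo μ W' Y := by
    intro n W' hm
    have h5 : mutInfo μ W' Y + condMutInfo μ X Y W'
        = mutInfo μ X Y + condMutInfo μ W' Y X := mi_chain W' X Y
    have h0 : condMutInfo μ W' Y X = 0 := cmi_markov_zero hμ (markov_comp_right hm Prod.fst)
    linarith
  set S1 : Set ℝ := {v : ℝ | ∃ (n : ℕ) (W' : Ω → Fin n),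
      IsMarkov μ W' X (fun ω => (Y ω, Z ω)) ∧
      v = l * mutInfo μ W' Y + (1 - l) * mutInfo μ W' Z + condMutInfo μ X Y W'} with hS1def
  set S2 : Set ℝ := {v : ℝ | ∃ (n : ℕ) (W' : Ω → Fin n),
      IsMarkov μ W' X (fun ω => (Y ω, Z ω)) ∧
      v = mutInfo μ W' Z - mutInfo μ W' Y} with hS2def
  have hS2boundv : ∀ v ∈ S2, v ≤ ent μ Z := by
    rintro v ⟨n, W', hm, rfl⟩
    have h1 := mutInfo_nonneg hμ W' Y
    have h2 := mutInfo_le_ent hμ W' Z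
    linarith
  have hS2ne : S2.Nonempty :=
    ⟨mutInfo μ (fun _ : Ω => (0 : Fin 1)) Z - mutInfo μ (fun _ : Ω => (0 : Fin 1)) Y,
      1, fun _ => (0 : Fin 1), markov_comp_left hW (fun _ => (0 : Fin 1)), rfl⟩
  have hS2bdd : BddAbove S2 := ⟨ent μ Z, fun v hv => hS2boundv v hv⟩
  have h1l : (0:ℝ) ≤ 1 - l := by linarith
  have hS1eq : S1 = (fun v => mutInfo μ X Y + (1 - l) * v) '' S2 := by
    ext v
    simp only [hS1def, hS2def, Set.mem_setOf_eq, Set.mem_image]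
    constructor
    · rintro ⟨n, W', hm, rfl⟩
      exact ⟨mutInfo μ W' Z - mutInfo μ W' Y, ⟨n, W', hm, rfl⟩, by rw [hid n W' hm]; ring⟩
    · rintro ⟨v', ⟨n, W', hm, rfl⟩, rfl⟩
      exact ⟨n, W', hm, by rw [hid n W' hm]; ring⟩
  have hS1bdd : BddAbove S1 := by
    rw [hS1eq]
    refine ⟨mutInfo μ X Y + (1 - l) * ent μ Z, ?_⟩
    rintro x ⟨v, hv, rfl⟩
    have hb := hS2boundv v hv
    simp only []
    nlinarith
  constructor
  · set eW := Fintype.equivFin 𝒲 with heW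
    have hW0 : IsMarkov μ (fun ω => eW (W ω)) X (fun ω => (Y ω, Z ω)) :=
      markov_comp_left hW eW
    have r1 : mutInfo μ (fun ω => eW (W ω)) Y = mutInfo μ W Y :=
      mutInfo_comp_left eW.injective W Y
    have r2 : mutInfo μ (fun ω => eW (W ω)) Z = mutInfo μ W Z :=
      mutInfo_comp_left eW.injective W Z
    have r3 : condMutInfo μ X Y (fun ω => eW (W ω)) = condMutInfo μ X Y W :=
      cmi_comp_cond eW.injective X Y W
    have hmem : (l * mutInfo μ W Y + (1 - l) * mutInfo μ W Z + condMutInfo μ X Y W) ∈ S1 :=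
      ⟨Fintype.card 𝒲, fun ω => eW (W ω), hW0, by rw [r1, r2, r3]⟩
    have hle : l * mutInfo μ W Y + (1 - l) * mutInfo μ W Z + condMutInfo μ U Y W
        + condMutInfo μ V Z W - condMutInfo μ U V W
        ≤ l * mutInfo μ W Y + (1 - l) * mutInfo μ W Z + condMutInfo μ X Y W := by linarith
    exact le_trans hle (le_csSup hS1bdd hmem)
  · rw [hS1eq]
    rcases eq_or_lt_of_le h1l with hc | hc
    · have hfun : (fun v : ℝ => mutInfo μ X Y + (1 - l) * v) = fun _ => mutInfo μ X Y := by
        funext v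
        rw [← hc]
        ring
      rw [hfun, Set.Nonempty.image_const hS2ne _, csSup_singleton, ← hc]
      ring
    · apply le_antisymm
      · refine csSup_le (hS2ne.image _) ?_
        rintro x ⟨v, hv, rfl⟩
        have hb := le_csSup hS2bdd hv
        simp only []
        nlinarith
      · have himgbdd : BddAbove ((fun v => mutInfo μ X Y + (1 - l) * v) '' S2) := by
          refine ⟨mutInfo μ X Y + (1 - l) * ent μ Z, ?_⟩
          rintro x ⟨v, hv, rfl⟩
          have hb := hS2boundv v hv
          simp only []
          nlinarith
        have hsup2 : sSup S2
            ≤ (sSup ((fun v => mutInfo μ X Y + (1 - l) * v) '' S2) - mutInfo μ X Y)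
              / (1 - l) := by
          refine csSup_le hS2ne ?_
          intro v hv
          have hmem2 : mutInfo μ X Y + (1 - l) * v
              ∈ (fun v => mutInfo μ X Y + (1 - l) * v) '' S2 := ⟨v, hv, rfl⟩
          have hb := le_csSup himgbdd hmem2
          rw [le_div_iff₀ hc]
          linarith
        have h3 := mul_le_mul_of_nonneg_left hsup2 (le_of_lt hc)
        have h4 : (1 - l) * ((sSup ((fun v => mutInfo μ X Y + (1 - l) * v) '' S2)
            - mutInfo μ X Y) / (1 - l))
            = sSup ((fun v => mutInfo μ X Y + (1 - l) * v) '' S2) - mutInfo μ X Y := by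
          field_simp
        rw [h4] at h3
        linarith

end
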